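/- Let q be an odd prime power, G = PGL_2(F_q), K the nonsplit torus of order q+1 embedded via F_{q^2}^×/F_q^× using a nonsquare δ. For c ∈ F_q with c ≠ ±1, the double coset K·s·K with s = [[y, δx],[0,1]] (any solution of (y+c)^2 - δx^2 = c^2-1) is the disjoint union of the q+1 right cosets [[y, δx],[0,1]]·K, one for each solution (y,x) ∈ F_q^2 of (y+c)^2 - δx^2 = c^2-1; in particular the conic (y+c)^2 - δx^2 = c^2-1 has exactly q+1 points over F_q when c ≠ ±1. -/

import Mathlib

open scoped MatrixGroups Pointwise

/-- `PGL₂(F) = GL₂(F)` modulo its center. -/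
abbrev PGL2 (F : Type*) [Field F] : Type _ :=
  GL (Fin 2) F ⧸ Subgroup.center (GL (Fin 2) F)

/-- The canonical projection `GL₂(F) → PGL₂(F)`. -/
def pglProj (F : Type*) [Field F] : GL (Fin 2) F →* PGL2 F :=
  QuotientGroup.mk' _

/-- The subset of `PGL₂(F)` of classes of invertible matrices `!![y, x; z, w]`. -/
def pglSet (F : Type*) [Field F] (y x z w : F) : Set (PGL2 F) :=
  {g | ∃ M : GL (Fin 2) F,
    (↑M : Matrix (Fin 2) (Fin 2) F) = !![y, x; z, w] ∧ g = pglProj F M}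

/-- The image `K` in `PGL₂(F)` of the nonsplit torus `{!![b, aδ; a, b] : (a,b) ≠ (0,0)}`. -/
def setK (F : Type*) [Field F] (δ : F) : Set (PGL2 F) :=
  {g | ∃ a b : F, ∃ M : GL (Fin 2) F,
    (↑M : Matrix (Fin 2) (Fin 2) F) = !![b, a * δ; a, b] ∧ g = pglProj F M}

namespace Stmt18

variable {F : Type*} [Field F]

/-- torus matrix attached to a pair `(re, im)`. -/
def Km (δ : F) (w : F × F) : Matrix (Fin 2) (Fin 2) F := !![w.1, w.2 * δ; w.2, w.1]

/-- upper triangular representative. -/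
def Sm (δ y x : F) : Matrix (Fin 2) (Fin 2) F := !![y, δ * x; 0, 1]

lemma det_Km (δ : F) (w : F × F) : (Km δ w).det = w.1 ^ 2 - δ * w.2 ^ 2 := by
  simp [Km, Matrix.det_fin_two_of]; ring

lemma det_Sm (δ y x : F) : (Sm δ y x).det = y := by
  simp [Sm, Matrix.det_fin_two_of]

lemma nsq_ne_zero {δ : F} (hδ : ¬ IsSquare δ) : δ ≠ 0 := by
  rintro rfl; exact hδ ⟨0, by ring⟩

lemma norm_ne_zero {δ : F} (hδ : ¬ IsSquare δ) {u v : F} (h : ¬ (u = 0 ∧ v = 0)) :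
    u ^ 2 - δ * v ^ 2 ≠ 0 := by
  intro h0
  by_cases hv : v = 0
  · subst hv
    have : u = 0 := by
      have : u ^ 2 = 0 := by linear_combination h0
      exact pow_eq_zero_iff (by norm_num) |>.mp this
    exact h ⟨this, rfl⟩
  · refine hδ ⟨u / v, ?_⟩
    rw [div_mul_div_comm, eq_div_iff (mul_ne_zero hv hv)]
    linear_combination -h0

lemma coe_det_ne_zero (M : GL (Fin 2) F) : ((M : Matrix (Fin 2) (Fin 2) F)).det ≠ 0 := by
  have : IsUnit (M : Matrix (Fin 2) (Fin 2) F) := ⟨M, rfl⟩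
  exact ((Matrix.isUnit_iff_isUnit_det _).mp this).ne_zero

/-- GL element from a matrix with nonzero determinant. -/
def glMk (A : Matrix (Fin 2) (Fin 2) F) (h : A.det ≠ 0) : GL (Fin 2) F :=
  Matrix.GeneralLinearGroup.mkOfDetNeZero A h

@[simp] lemma coe_glMk (A : Matrix (Fin 2) (Fin 2) F) (h : A.det ≠ 0) :
    ((glMk A h : GL (Fin 2) F) : Matrix (Fin 2) (Fin 2) F) = A := rfl

lemma scalar_mem_center (u : F) (hu : u ≠ 0) :
    (glMk (u • (1 : Matrix (Fin 2) (Fin 2) F))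
      (by simp [Matrix.det_smul]; exact hu) : GL (Fin 2) F)
      ∈ Subgroup.center (GL (Fin 2) F) := by
  rw [Subgroup.mem_center_iff]
  intro g
  apply Units.ext
  show (g : Matrix (Fin 2) (Fin 2) F) * (u • 1) = (u • 1) * (g : Matrix (Fin 2) (Fin 2) F)
  simp [mul_smul_comm, smul_mul_assoc]

lemma proj_smul (M N : GL (Fin 2) F) (u : F) (hu : u ≠ 0)
    (h : (M : Matrix (Fin 2) (Fin 2) F) = u • (N : Matrix (Fin 2) (Fin 2) F)) :
    pglProj F M = pglProj F N := by
  have hdet : (u • (1 : Matrix (Fin 2) (Fin 2) F)).det ≠ 0 := by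
    simp [Matrix.det_smul]; exact hu
  have hM : M = glMk _ hdet * N := by
    apply Units.ext
    show (M : Matrix (Fin 2) (Fin 2) F) = (u • 1) * (N : Matrix (Fin 2) (Fin 2) F)
    rw [h, smul_mul_assoc, one_mul]
  rw [hM, map_mul]
  have : pglProj F (glMk _ hdet) = 1 := by
    rw [pglProj, QuotientGroup.mk'_apply, QuotientGroup.eq_one_iff]
    exact scalar_mem_center u hu
  rw [this, one_mul]

lemma center_scalar {Z : GL (Fin 2) F} (hZ : Z ∈ Subgroup.center (GL (Fin 2) F)) :
    ∃ u : F, u ≠ 0 ∧ (Z : Matrix (Fin 2) (Fin 2) F) = u • 1 := by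
  have hU : (!![1, 1; 0, 1] : Matrix (Fin 2) (Fin 2) F).det ≠ 0 := by
    simp [Matrix.det_fin_two_of]
  have hL : (!![1, 0; 1, 1] : Matrix (Fin 2) (Fin 2) F).det ≠ 0 := by
    simp [Matrix.det_fin_two_of]
  have h1 := Subgroup.mem_center_iff.mp hZ (glMk _ hU)
  have h2 := Subgroup.mem_center_iff.mp hZ (glMk _ hL)
  have e1 : (glMk _ hU * Z : GL (Fin 2) F).val = (Z * glMk _ hU : GL (Fin 2) F).val := by rw [h1]
  have e2 : (glMk _ hL * Z : GL (Fin 2) F).val = (Z * glMk _ hL : GL (Fin 2) F).val := by rw [h2]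
  set A := (Z : Matrix (Fin 2) (Fin 2) F) with hA
  have e1' : !![1,1;0,1] * A = A * !![1,1;0,1] := e1
  have e2' : !![1,0;1,1] * A = A * !![1,0;1,1] := e2
  have q10 : A 1 0 = 0 := by
    have := congrFun (congrFun e1' 0) 0
    simpa [Matrix.mul_apply, Fin.sum_univ_two] using this
  have q01 : A 0 1 = 0 := by
    have := congrFun (congrFun e2' 1) 1
    simpa [Matrix.mul_apply, Fin.sum_univ_two] using this
  have qdiag : A 1 1 = A 0 0 := by
    have := congrFun (congrFun e1' 0) 1
    simp [Matrix.mul_apply, Fin.sum_univ_two] at this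
    linear_combination this
  refine ⟨A 0 0, ?_, ?_⟩
  · have hdet := coe_det_ne_zero Z
    rw [← hA, Matrix.det_fin_two, q10, q01, qdiag] at hdet
    intro h0; rw [h0] at hdet; simp at hdet
  · apply Matrix.ext
    intro i j
    fin_cases i <;> fin_cases j <;>
      simp [q10, q01, qdiag, Matrix.one_apply]

lemma proj_eq_scalar {M N : GL (Fin 2) F} (h : pglProj F M = pglProj F N) :
    ∃ u : F, u ≠ 0 ∧ (M : Matrix (Fin 2) (Fin 2) F) = u • (N : Matrix (Fin 2) (Fin 2) F) := by
  rw [pglProj, QuotientGroup.mk'_eq_mk'] at h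
  obtain ⟨z, hz, hMz⟩ := h
  obtain ⟨u, hu, hzval⟩ := center_scalar hz
  refine ⟨u⁻¹, inv_ne_zero hu, ?_⟩
  have hN : (N : Matrix (Fin 2) (Fin 2) F)
      = (M : Matrix (Fin 2) (Fin 2) F) * (u • 1) := by
    rw [← hzval]
    exact (congrArg Units.val hMz).symm
  rw [hN, mul_smul_comm, mul_one, smul_smul, inv_mul_cancel₀ hu, one_smul]

lemma sol_y_ne_zero {δ : F} (hδ : ¬ IsSquare δ) {c y x : F}
    (hp : (y + c) ^ 2 - δ * x ^ 2 = c ^ 2 - 1) : y ≠ 0 := by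
  rintro rfl
  have h1 : δ * x ^ 2 = 1 := by linear_combination -hp
  exact norm_ne_zero hδ (F := F) (u := 1) (v := x)
    (fun h => one_ne_zero h.1) (by linear_combination -h1)

/-- The bi-`K`-invariant quantity attached to a matrix. -/
def Rm (δ c : F) (m : Matrix (Fin 2) (Fin 2) F) : F :=
  (c - 1) * (δ * (m 0 0 - m 1 1) ^ 2 - (m 0 1 - δ * m 1 0) ^ 2)
    - (c + 1) * (δ * (m 0 0 + m 1 1) ^ 2 - (m 0 1 + δ * m 1 0) ^ 2)

lemma Rinv (δ c y x : F) (w1 w2 : F × F) :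
    Rm δ c (Km δ w1 * Sm δ y x * Km δ w2)
      = (w1.1 ^ 2 - δ * w1.2 ^ 2) * (w2.1 ^ 2 - δ * w2.2 ^ 2) * (-2 * δ)
        * (y ^ 2 + 2 * c * y - δ * x ^ 2 + 1) := by
  obtain ⟨b1, a1⟩ := w1
  obtain ⟨b2, a2⟩ := w2
  simp only [Rm, Km, Sm, Matrix.mul_fin_two]
  simp [Matrix.cons_val_zero, Matrix.cons_val_one, Matrix.head_cons]
  ring

lemma Rinv2 (δ c Y X : F) (w : F × F) :
    Rm δ c (Sm δ Y X * Km δ w)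
      = (w.1 ^ 2 - δ * w.2 ^ 2) * (-2 * δ) * (Y ^ 2 + 2 * c * Y - δ * X ^ 2 + 1) := by
  obtain ⟨b, a⟩ := w
  simp only [Rm, Sm, Km, Matrix.mul_fin_two]
  simp [Matrix.cons_val_zero, Matrix.cons_val_one, Matrix.head_cons]
  ring

lemma decompose {δ : F} (hδ : ¬ IsSquare δ) (h2 : (2 : F) ≠ 0) (c : F)
    (N : Matrix (Fin 2) (Fin 2) F) (hdet : N.det ≠ 0) (hR : Rm δ c N = 0) :
    ∃ Y X : F, ∃ w : F × F, Y ≠ 0 ∧ w.1 ^ 2 - δ * w.2 ^ 2 ≠ 0 ∧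
      N = Sm δ Y X * Km δ (w.1, w.2) ∧ (Y + c) ^ 2 - δ * X ^ 2 = c ^ 2 - 1 := by
  have hδ0 := nsq_ne_zero hδ
  have hDne : N 1 1 ^ 2 - δ * N 1 0 ^ 2 ≠ 0 := by
    apply norm_ne_zero hδ
    rintro ⟨h11, h10⟩
    exact hdet (by rw [Matrix.det_fin_two, h11, h10]; ring)
  refine ⟨(N 0 0 * N 1 1 - N 0 1 * N 1 0) / (N 1 1 ^ 2 - δ * N 1 0 ^ 2),
    (N 0 1 * N 1 1 / δ - N 0 0 * N 1 0) / (N 1 1 ^ 2 - δ * N 1 0 ^ 2),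
    (N 1 1, N 1 0), ?_, hDne, ?_, ?_⟩
  · intro h0
    have hY : N 0 0 * N 1 1 - N 0 1 * N 1 0 = 0 := by
      have := div_eq_zero_iff.mp h0
      tauto
    exact hdet (by rw [Matrix.det_fin_two]; linear_combination hY)
  · have hD' : N 1 1 ^ 2 - N 1 0 ^ 2 * δ ≠ 0 := by rw [mul_comm]; exact hDne
    have hD'' : -(N 1 0 ^ 2 * δ) + N 1 1 ^ 2 ≠ 0 := by rw [neg_add_eq_sub, mul_comm]; exact hDne
    apply Matrix.ext; intro i j
    fin_cases i <;> fin_cases j <;>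
      simp [Sm, Km, Matrix.mul_apply, Fin.sum_univ_two] <;>
      field_simp <;> ring
  · have hfact : N = Sm δ ((N 0 0 * N 1 1 - N 0 1 * N 1 0) / (N 1 1 ^ 2 - δ * N 1 0 ^ 2))
        ((N 0 1 * N 1 1 / δ - N 0 0 * N 1 0) / (N 1 1 ^ 2 - δ * N 1 0 ^ 2))
        * Km δ (N 1 1, N 1 0) := by
      have hD' : N 1 1 ^ 2 - N 1 0 ^ 2 * δ ≠ 0 := by rw [mul_comm]; exact hDne
      have hD'' : -(N 1 0 ^ 2 * δ) + N 1 1 ^ 2 ≠ 0 := by rw [neg_add_eq_sub, mul_comm]; exact hDne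
      apply Matrix.ext; intro i j
      fin_cases i <;> fin_cases j <;>
        simp [Sm, Km, Matrix.mul_apply, Fin.sum_univ_two] <;>
        field_simp <;> ring
    have h3 := Rinv2 δ c ((N 0 0 * N 1 1 - N 0 1 * N 1 0) / (N 1 1 ^ 2 - δ * N 1 0 ^ 2))
        ((N 0 1 * N 1 1 / δ - N 0 0 * N 1 0) / (N 1 1 ^ 2 - δ * N 1 0 ^ 2)) (N 1 1, N 1 0)
    rw [← hfact, hR] at h3
    have h4 := h3.symm
    rcases mul_eq_zero.mp h4 with h5 | h6
    · rcases mul_eq_zero.mp h5 with h7 | h8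
      · exact absurd h7 hDne
      · exfalso
        rcases mul_eq_zero.mp h8 with h9 | h10
        · exact (neg_ne_zero.mpr h2) h9
        · exact hδ0 h10
    · linear_combination h6

lemma matFromElems (δ lam y x Y X : F) (k1 k2 : F × F) (h2 : (2 : F) ≠ 0)
    (hu1 : (k1.1*(y+1) + δ*k1.2*x)*k2.1 + δ*((k1.1*x + k1.2*(y+1))*k2.2) = lam*(Y+1))
    (hu2 : (k1.1*(y+1) + δ*k1.2*x)*k2.2 + (k1.1*x + k1.2*(y+1))*k2.1 = lam*X)
    (hv1 : (k1.1*(y-1) - δ*k1.2*x)*k2.1 + δ*((-(k1.1*x) + k1.2*(y-1))*(-k2.2)) = lam*(Y-1))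
    (hv2 : (k1.1*(y-1) - δ*k1.2*x)*(-k2.2) + (-(k1.1*x) + k1.2*(y-1))*k2.1 = lam*(-X)) :
    Km δ k1 * Sm δ y x * Km δ k2 = lam • Sm δ Y X := by
  have key : (2 : F) • (Km δ k1 * Sm δ y x * Km δ k2) = (2 : F) • (lam • Sm δ Y X) := by
    apply Matrix.ext; intro i j
    have hsimp : ∀ m : Matrix (Fin 2) (Fin 2) F, ∀ i j, ((2:F) • m) i j = 2 * m i j :=
      fun m i j => rfl
    fin_cases i <;> fin_cases j <;>
      rw [hsimp, hsimp] <;>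
      simp [Km, Sm, Matrix.mul_apply, Fin.sum_univ_two, -mul_eq_mul_left_iff, -mul_eq_zero]
    · linear_combination hu1 + hv1
    · linear_combination δ*hu2 - δ*hv2
    · linear_combination hu2 + hv2
    · linear_combination hu1 - hv1
  exact smul_right_injective _ h2 key

lemma sup {δ : F} (hδ : ¬ IsSquare δ) (h2 : (2 : F) ≠ 0) {c y x Y X : F}
    (hc1 : c ≠ 1) (hc2 : c ≠ -1)
    (hp : (y + c) ^ 2 - δ * x ^ 2 = c ^ 2 - 1)
    (hp' : (Y + c) ^ 2 - δ * X ^ 2 = c ^ 2 - 1) :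
    ∃ (w1 w2 : F × F) (lam : F), (w1.1 ^ 2 - δ * w1.2 ^ 2 ≠ 0) ∧
      (w2.1 ^ 2 - δ * w2.2 ^ 2 ≠ 0) ∧ lam ≠ 0 ∧
      Km δ w1 * Sm δ y x * Km δ w2 = lam • Sm δ Y X := by
  have hδ0 := nsq_ne_zero hδ
  have hy : y ≠ 0 := sol_y_ne_zero hδ hp
  have hY : Y ≠ 0 := sol_y_ne_zero hδ hp'
  have h1c : (1 : F) - c ≠ 0 := sub_ne_zero.mpr (Ne.symm hc1)
  have h1c' : (1 : F) + c ≠ 0 := by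
    intro h; exact hc2 (by linear_combination h)
  have hNαne : (y+1)^2 - δ*x^2 ≠ 0 := by
    have e : (y+1)^2 - δ*x^2 = 2*y*(1-c) := by linear_combination hp
    rw [e]; exact mul_ne_zero (mul_ne_zero h2 hy) h1c
  have hNAne : (Y+1)^2 - δ*X^2 ≠ 0 := by
    have e : (Y+1)^2 - δ*X^2 = 2*Y*(1-c) := by linear_combination hp'
    rw [e]; exact mul_ne_zero (mul_ne_zero h2 hY) h1c
  have hNBne : (Y-1)^2 - δ*X^2 ≠ 0 := by
    have e : (Y-1)^2 - δ*X^2 = -(2*Y*(1+c)) := by linear_combination hp'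
    rw [e]; exact neg_ne_zero.mpr (mul_ne_zero (mul_ne_zero h2 hY) h1c')
  have hN : ((Y+1)^2 - δ*X^2) * ((y-1)^2 - δ*x^2)
      = ((y+1)^2 - δ*x^2) * ((Y-1)^2 - δ*X^2) := by
    linear_combination (4*Y) * hp - (4*y) * hp'
  by_cases hdeg : X = -x ∧ Y = -y - 2*c
  · obtain ⟨hX, hY2⟩ := hdeg
    subst hX; subst hY2
    refine ⟨((δ*((y+1)*x + x*(1-y-2*c))), (-((y+1)*(1-y-2*c) + δ*x^2))), ((0 : F), (1 : F)), -δ*((y+1)^2 - δ*x^2), ?_, ?_, ?_, ?_⟩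
    · have e : (δ*((y+1)*x + x*(1-y-2*c)))^2 - δ*(-((y+1)*(1-y-2*c) + δ*x^2))^2
          = (((y+1)^2 - δ*x^2) * ((-y - 2*c + 1)^2 - δ*(-x)^2)) * (-δ) := by ring
      rw [e]
      exact mul_ne_zero (mul_ne_zero hNαne hNAne) (neg_ne_zero.mpr hδ0)
    · intro h0
      exact hδ0 (by linear_combination -h0)
    · exact mul_ne_zero (neg_ne_zero.mpr hδ0) hNαne
    · refine matFromElems _ _ _ _ _ _ _ _ h2 ?_ ?_ ?_ ?_
      · ring
      · ring
      · linear_combination ((-2)*δ + (-2)*y*δ) * hp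
      · linear_combination (2*x*δ) * hp
  · have he : ¬ ((y*Y - 1 - δ*x*X) = 0 ∧ (-(x+X)) = 0) := by
      rintro ⟨hE1, hE2⟩
      apply hdeg
      have hX : X = -x := by linear_combination -hE2
      subst hX
      refine ⟨rfl, ?_⟩
      have h0 : y * (Y + y + 2*c) = 0 := by linear_combination hE1 + hp
      rcases mul_eq_zero.mp h0 with h | h
      · exact absurd h hy
      · linear_combination h
    have hEne : (y*Y - 1 - δ*x*X)^2 - δ*(-(x+X))^2 ≠ 0 := norm_ne_zero hδ he
    refine ⟨((((y+1)*(Y+1) - δ*x*X)*((y*Y - 1 - δ*x*X)*((y+1)*(Y-1) - δ*x*X) + δ*(-(x+X))*((y+1)*X - x*(Y-1))) - δ*((y+1)*X - x*(Y+1))*((y*Y - 1 - δ*x*X)*((y+1)*X - x*(Y-1)) + (-(x+X))*((y+1)*(Y-1) - δ*x*X))), (((y+1)*X - x*(Y+1))*((y*Y - 1 - δ*x*X)*((y+1)*(Y-1) - δ*x*X) + δ*(-(x+X))*((y+1)*X - x*(Y-1))) - ((y+1)*(Y+1) - δ*x*X)*((y*Y - 1 - δ*x*X)*((y+1)*X -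 x*(Y-1)) + (-(x+X))*((y+1)*(Y-1) - δ*x*X)))), (((y*Y - 1 - δ*x*X)*((y+1)*(Y-1) - δ*x*X) + δ*(-(x+X))*((y+1)*X - x*(Y-1))), ((y*Y - 1 - δ*x*X)*((y+1)*X - x*(Y-1)) + (-(x+X))*((y+1)*(Y-1) - δ*x*X))), (((y+1)^2 - δ*x^2)^2 * ((Y-1)^2 - δ*X^2) * ((y*Y - 1 - δ*x*X)^2 - δ*(-(x+X))^2)), ?_, ?_, ?_, ?_⟩
    · have e : (((y+1)*(Y+1) - δ*x*X)*((y*Y - 1 - δ*x*X)*((y+1)*(Y-1) - δ*x*X) + δ*(-(x+X))*((y+1)*X - x*(Y-1))) - δ*((y+1)*X - x*(Y+1))*((y*Y - 1 - δ*x*X)*((y+1)*X - x*(Y-1)) + (-(x+X))*((y+1)*(Y-1) - δ*x*X)))^2 - δ*(((y+1)*X - x*(Y+1))*((y*Y - 1 - δ*x*X)*((y+1)*(Y-1) - δ*x*X) + δ*(-(x+X))*((y+1)*X - x*(Y-1))) - ((y+1)*(Y+1) - δ*x*X)*((y*Y - 1 - δ*x*X)*((y+1)*X - x*(Y-1)) +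 (-(x+X))*((y+1)*(Y-1) - δ*x*X)))^2
          = (((y+1)^2 - δ*x^2) * ((Y+1)^2 - δ*X^2)) *
            (((y*Y - 1 - δ*x*X)^2 - δ*(-(x+X))^2) * (((y+1)^2 - δ*x^2) * ((Y-1)^2 - δ*X^2))) := by ring
      rw [e]
      exact mul_ne_zero (mul_ne_zero hNαne hNAne) (mul_ne_zero hEne (mul_ne_zero hNαne hNBne))
    · have e : ((y*Y - 1 - δ*x*X)*((y+1)*(Y-1) - δ*x*X) + δ*(-(x+X))*((y+1)*X - x*(Y-1)))^2 - δ*((y*Y - 1 - δ*x*X)*((y+1)*X - x*(Y-1)) + (-(x+X))*((y+1)*(Y-1) - δ*x*X))^2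
          = ((y*Y - 1 - δ*x*X)^2 - δ*(-(x+X))^2) * (((y+1)^2 - δ*x^2) * ((Y-1)^2 - δ*X^2)) := by ring
      rw [e]
      exact mul_ne_zero hEne (mul_ne_zero hNαne hNBne)
    · exact mul_ne_zero (mul_ne_zero (pow_ne_zero 2 hNαne) hNBne) hEne
    · refine matFromElems _ _ _ _ _ _ _ _ h2 ?_ ?_ ?_ ?_
      · ring
      · ring
      · have hd : 2*(((((y+1)*(Y+1) - δ*x*X)*((y*Y - 1 - δ*x*X)*((y+1)*(Y-1) - δ*x*X) + δ*(-(x+X))*((y+1)*X - x*(Y-1))) - δ*((y+1)*X - x*(Y+1))*((y*Y - 1 - δ*x*X)*((y+1)*X - x*(Y-1)) + (-(x+X))*((y+1)*(Y-1) - δ*x*X)))*(y-1) - δ*(((y+1)*X - x*(Y+1))*((y*Y - 1 - δ*x*X)*((y+1)*(Y-1) - δ*x*X) + δ*(-(x+X))*((y+1)*X - x*(Y-1))) - ((y+1)*(Y+1) - δ*x*X)*((y*Y - 1 - δ*x*X)*((y+1)*X - x*(Y-1)) + (-(x+X))*((y+1)*(Y-1) - δ*x*X)))*x)*((y*Y -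 1 - δ*x*X)*((y+1)*(Y-1) - δ*x*X) + δ*(-(x+X))*((y+1)*X - x*(Y-1))) + δ*((-((((y+1)*(Y+1) - δ*x*X)*((y*Y - 1 - δ*x*X)*((y+1)*(Y-1) - δ*x*X) + δ*(-(x+X))*((y+1)*X - x*(Y-1))) - δ*((y+1)*X - x*(Y+1))*((y*Y - 1 - δ*x*X)*((y+1)*X - x*(Y-1)) + (-(x+X))*((y+1)*(Y-1) - δ*x*X)))*x) + (((y+1)*X - x*(Y+1))*((y*Y - 1 - δ*x*X)*((y+1)*(Y-1) - δ*x*X) + δ*(-(x+X))*((y+1)*X - x*(Y-1))) - ((y+1)*(Y+1) - δ*x*X)*((y*Y - 1 - δ*x*X)*((y+1)*X - x*(Y-1)) + (-(x+X))*((y+1)*(Y-1) - δ*x*X)))*(y-1))*(-((y*Y - 1 - δ*x*X)*((y+1)*X - x*(Y-1)) + (-(x+X))*((y+1)*(Y-1) - δ*x*X)))))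
            = 2*((((y+1)^2 - δ*x^2)^2 * ((Y-1)^2 - δ*X^2) * ((y*Y - 1 - δ*x*X)^2 - δ*(-(x+X))^2))*(Y-1)) := by
          linear_combination (((y+1)^2 - δ*x^2) * (((y+1)*((Y-1)^2 + δ*X^2) + δ*x*(-2*(Y-1)*X))*(y*Y - 1 - δ*x*X) - δ*((y+1)*(-2*(Y-1)*X) + x*((Y-1)^2 + δ*X^2))*(-(x+X)))) * hN
        exact mul_left_cancel₀ h2 hd
      · have hd : 2*(((((y+1)*(Y+1) - δ*x*X)*((y*Y - 1 - δ*x*X)*((y+1)*(Y-1) - δ*x*X) + δ*(-(x+X))*((y+1)*X - x*(Y-1))) - δ*((y+1)*X - x*(Y+1))*((y*Y - 1 - δ*x*X)*((y+1)*X - x*(Y-1)) + (-(x+X))*((y+1)*(Y-1) - δ*x*X)))*(y-1) - δ*(((y+1)*X - x*(Y+1))*((y*Y - 1 - δ*x*X)*((y+1)*(Y-1) - δ*x*X) + δ*(-(x+X))*((y+1)*X - x*(Y-1))) - ((y+1)*(Y+1) - δ*x*X)*((y*Y - 1 - δ*x*X)*((y+1)*X - x*(Y-1)) + (-(x+X))*((y+1)*(Y-1)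 - δ*x*X)))*x)*(-((y*Y - 1 - δ*x*X)*((y+1)*X - x*(Y-1)) + (-(x+X))*((y+1)*(Y-1) - δ*x*X))) + (-((((y+1)*(Y+1) - δ*x*X)*((y*Y - 1 - δ*x*X)*((y+1)*(Y-1) - δ*x*X) + δ*(-(x+X))*((y+1)*X - x*(Y-1))) - δ*((y+1)*X - x*(Y+1))*((y*Y - 1 - δ*x*X)*((y+1)*X - x*(Y-1)) + (-(x+X))*((y+1)*(Y-1) - δ*x*X)))*x) + (((y+1)*X - x*(Y+1))*((y*Y - 1 - δ*x*X)*((y+1)*(Y-1) - δ*x*X) + δ*(-(x+X))*((y+1)*X - x*(Y-1))) - ((y+1)*(Y+1) - δ*x*X)*((y*Y - 1 - δ*x*X)*((y+1)*X - x*(Y-1)) + (-(x+X))*((y+1)*(Y-1) - δ*x*X)))*(y-1))*((y*Y - 1 - δ*x*X)*((y+1)*(Y-1) - δ*x*X) + δ*(-(x+X))*((y+1)*X - x*(Y-1))))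
            = 2*((((y+1)^2 - δ*x^2)^2 * ((Y-1)^2 - δ*X^2) * ((y*Y - 1 - δ*x*X)^2 - δ*(-(x+X))^2))*(-X)) := by
          linear_combination (((y+1)^2 - δ*x^2) * (((y+1)*(-2*(Y-1)*X) + x*((Y-1)^2 + δ*X^2))*(y*Y - 1 - δ*x*X) - ((y+1)*((Y-1)^2 + δ*X^2) + δ*x*(-2*(Y-1)*X))*(-(x+X)))) * hN
        exact mul_left_cancel₀ h2 hd

open Polynomial Finset in
lemma card_conic {F : Type*} [Field F] [Fintype F] [DecidableEq F] {δ c : F}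
    (hδ : ¬ IsSquare δ) (h2 : (2 : F) ≠ 0) (hodd : Fintype.card F % 2 = 1)
    (hc1 : c ≠ 1) (hc2 : c ≠ -1) :
    (Finset.univ.filter
        (fun p : F × F => (p.1 + c) ^ 2 - δ * p.2 ^ 2 = c ^ 2 - 1)).card
      = Fintype.card F + 1 := by
  have hδ0 := nsq_ne_zero hδ
  have hd : c ^ 2 - 1 ≠ 0 := by
    intro h
    rcases mul_eq_zero.mp (show (c - 1) * (c + 1) = 0 by linear_combination h) with h' | h'
    · exact hc1 (by linear_combination h')
    · exact hc2 (by linear_combination h')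
  have hden : ∀ t : F, 1 - δ * t ^ 2 ≠ 0 := by
    intro t h
    exact norm_ne_zero hδ (F := F) (u := 1) (v := t)
      (fun h' => one_ne_zero h'.1) (by linear_combination h)
  obtain ⟨y0, x0, hP0⟩ : ∃ y0 x0 : F, (y0 + c) ^ 2 - δ * x0 ^ 2 = c ^ 2 - 1 := by
    have hf : (C 1 * X ^ 2 + C (2 * c) * X + C 1 : F[X]).degree = 2 :=
      Polynomial.degree_quadratic one_ne_zero
    have hg : (C (-δ) * X ^ 2 + C 0 * X + C 0 : F[X]).degree = 2 :=
      Polynomial.degree_quadratic (neg_ne_zero.mpr hδ0)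
    obtain ⟨a, b, hab⟩ := FiniteField.exists_root_sum_quadratic hf hg hodd
    simp only [eval_add, eval_mul, eval_pow, eval_C, eval_X] at hab
    exact ⟨a, b, by linear_combination hab⟩
  have hbij : (Finset.univ.filter
        (fun p : F × F => (p.1 + c) ^ 2 - δ * p.2 ^ 2 = c ^ 2 - 1)).card
      = (Finset.univ.filter (fun p : F × F => p.1 ^ 2 - δ * p.2 ^ 2 = 1)).card := by
    refine Finset.card_bij'
      (fun p _ => (((p.1 + c) * (y0 + c) - δ * p.2 * x0) / (c ^ 2 - 1),
        ((y0 + c) * p.2 - (p.1 + c) * x0) / (c ^ 2 - 1)))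
      (fun p _ => ((y0 + c) * p.1 + δ * x0 * p.2 - c, (y0 + c) * p.2 + x0 * p.1))
      ?_ ?_ ?_ ?_
    · intro p hp
      have hp' := (Finset.mem_filter.mp hp).2
      refine Finset.mem_filter.mpr ⟨Finset.mem_univ _, ?_⟩
      show ((((p.1 + c) * (y0 + c) - δ * p.2 * x0) / (c ^ 2 - 1))) ^ 2
          - δ * ((((y0 + c) * p.2 - (p.1 + c) * x0) / (c ^ 2 - 1))) ^ 2 = 1
      have hkey : ((p.1 + c) * (y0 + c) - δ * p.2 * x0) ^ 2
          - δ * ((y0 + c) * p.2 - (p.1 + c) * x0) ^ 2 = (c ^ 2 - 1) ^ 2 := by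
        linear_combination ((y0 + c) ^ 2 - δ * x0 ^ 2) * hp' + (c ^ 2 - 1) * hP0
      rw [div_pow, div_pow, ← mul_div_assoc, ← sub_div, hkey,
        div_self (pow_ne_zero 2 hd)]
    · intro p hp
      have hp' := (Finset.mem_filter.mp hp).2
      refine Finset.mem_filter.mpr ⟨Finset.mem_univ _, ?_⟩
      show ((y0 + c) * p.1 + δ * x0 * p.2 - c + c) ^ 2
          - δ * ((y0 + c) * p.2 + x0 * p.1) ^ 2 = c ^ 2 - 1
      linear_combination (p.1 ^ 2 - δ * p.2 ^ 2) * hP0 + (c ^ 2 - 1) * hp'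
    · intro p hp
      have h1 : (y0 + c) * (((p.1 + c) * (y0 + c) - δ * p.2 * x0) / (c ^ 2 - 1))
          + δ * x0 * (((y0 + c) * p.2 - (p.1 + c) * x0) / (c ^ 2 - 1)) - c = p.1 := by
        rw [← mul_div_assoc, ← mul_div_assoc, ← add_div, sub_eq_iff_eq_add,
          div_eq_iff hd]
        linear_combination (p.1 + c) * hP0
      have h2' : (y0 + c) * (((y0 + c) * p.2 - (p.1 + c) * x0) / (c ^ 2 - 1))
          + x0 * (((p.1 + c) * (y0 + c) - δ * p.2 * x0) / (c ^ 2 - 1)) = p.2 := by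
        rw [← mul_div_assoc, ← mul_div_assoc, ← add_div, div_eq_iff hd]
        linear_combination p.2 * hP0
      exact Prod.ext_iff.mpr ⟨h1, h2'⟩
    · intro p hp
      have h1 : (((y0 + c) * p.1 + δ * x0 * p.2 - c + c) * (y0 + c)
          - δ * ((y0 + c) * p.2 + x0 * p.1) * x0) / (c ^ 2 - 1) = p.1 := by
        rw [div_eq_iff hd]
        linear_combination p.1 * hP0
      have h2' : ((y0 + c) * ((y0 + c) * p.2 + x0 * p.1)
          - ((y0 + c) * p.1 + δ * x0 * p.2 - c + c) * x0) / (c ^ 2 - 1) = p.2 := by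
        rw [div_eq_iff hd]
        linear_combination p.2 * hP0
      exact Prod.ext_iff.mpr ⟨h1, h2'⟩
  rw [hbij]
  have hparam : Finset.univ.filter (fun p : F × F => p.1 ^ 2 - δ * p.2 ^ 2 = 1)
      = insert ((-1 : F), (0 : F))
          (Finset.univ.image (fun t : F =>
            ((1 + δ * t ^ 2) / (1 - δ * t ^ 2), 2 * t / (1 - δ * t ^ 2)))) := by
    ext ⟨a, b⟩
    simp only [Finset.mem_filter, Finset.mem_insert, Finset.mem_image, Finset.mem_univ,
      true_and, Prod.mk.injEq]
    constructor
    · intro hab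
      by_cases ha : a = -1
      · left
        refine ⟨ha, ?_⟩
        have hb : δ * b ^ 2 = 0 := by rw [ha] at hab; linear_combination -hab
        rcases mul_eq_zero.mp hb with h | h
        · exact absurd h hδ0
        · exact pow_eq_zero_iff (by norm_num) |>.mp h
      · right
        have ha1 : a + 1 ≠ 0 := fun h => ha (by linear_combination h)
        have esub : 1 - δ * (b / (a + 1)) ^ 2 = ((a + 1) ^ 2 - δ * b ^ 2) / (a + 1) ^ 2 := by
          rw [div_pow, ← mul_div_assoc, eq_div_iff (pow_ne_zero 2 ha1), sub_mul, one_mul,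
            div_mul_cancel₀ _ (pow_ne_zero 2 ha1)]
        have eadd : 1 + δ * (b / (a + 1)) ^ 2 = ((a + 1) ^ 2 + δ * b ^ 2) / (a + 1) ^ 2 := by
          rw [div_pow, ← mul_div_assoc, eq_div_iff (pow_ne_zero 2 ha1), add_mul, one_mul,
            div_mul_cancel₀ _ (pow_ne_zero 2 ha1)]
        have hsub : 1 - δ * (b / (a + 1)) ^ 2 = 2 / (a + 1) := by
          rw [esub, div_eq_div_iff (pow_ne_zero 2 ha1) ha1]
          linear_combination (a + 1) * hab
        have hadd : 1 + δ * (b / (a + 1)) ^ 2 = 2 * a / (a + 1) := by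
          rw [eadd, div_eq_div_iff (pow_ne_zero 2 ha1) ha1]
          linear_combination (-(a + 1)) * hab
        refine ⟨b / (a + 1), ?_, ?_⟩
        · rw [hadd, hsub, div_div_div_cancel_right₀ ha1]
          exact mul_div_cancel_left₀ a h2
        · rw [hsub, mul_div_assoc', div_div_div_cancel_right₀ ha1]
          exact mul_div_cancel_left₀ b h2
    · rintro (⟨rfl, rfl⟩ | ⟨t, ht1, ht2⟩)
      · norm_num
      · rw [← ht1, ← ht2]
        have e2 : (1 + δ * t ^ 2) ^ 2 - δ * (2 * t) ^ 2 = (1 - δ * t ^ 2) ^ 2 := by ring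
        rw [div_pow, div_pow, ← mul_div_assoc, ← sub_div, e2,
          div_self (pow_ne_zero 2 (hden t))]
  rw [hparam]
  rw [Finset.card_insert_of_notMem, Finset.card_image_of_injective _ ?inj, Finset.card_univ]
  case inj =>
    intro t t' h
    rw [Prod.mk.injEq] at h
    obtain ⟨h1, hh2⟩ := h
    rw [div_eq_div_iff (hden t) (hden t')] at h1 hh2
    have key : (t - t') * (1 + δ * t * t') = 0 := by
      have k2 : (2 : F) * ((t - t') * (1 + δ * t * t')) = 0 := by linear_combination hh2
      exact (mul_eq_zero.mp k2).resolve_left h2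
    rcases mul_eq_zero.mp key with h | h
    · linear_combination h
    · have keysq : (t - t') * (t + t') = 0 := by
        have k3 : (2 : F) * (δ * ((t - t') * (t + t'))) = 0 := by linear_combination h1
        rcases mul_eq_zero.mp ((mul_eq_zero.mp k3).resolve_left h2) with h' | h'
        · exact absurd h' hδ0
        · exact h'
      rcases mul_eq_zero.mp keysq with h' | h'
      · linear_combination h'
      · exfalso
        have ht : t = -t' := by linear_combination h'
        subst ht
        exact hden t' (by linear_combination h)
  · intro hmem
    obtain ⟨t, _, ht⟩ := Finset.mem_image.mp hmem
    rw [Prod.mk.injEq] at ht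
    obtain ⟨ht1, ht2⟩ := ht
    have htz : t = 0 := by
      rcases div_eq_zero_iff.mp ht2 with h | h
      · rcases mul_eq_zero.mp h with h' | h'
        · exact absurd h' h2
        · exact h'
      · exact absurd h (hden t)
    subst htz
    rw [div_eq_iff (hden 0)] at ht1
    exact h2 (by linear_combination ht1)

lemma mem_setK (δ : F) (w : F × F) (h : w.1 ^ 2 - δ * w.2 ^ 2 ≠ 0) :
    pglProj F (glMk (Km δ w) (by rw [det_Km]; exact h)) ∈ setK F δ :=
  ⟨w.2, w.1, glMk (Km δ w) (by rw [det_Km]; exact h), rfl, rfl⟩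

lemma setK_mul_mem {δ : F} {g1 g2 : PGL2 F} (h1 : g1 ∈ setK F δ) (h2 : g2 ∈ setK F δ) :
    g1 * g2 ∈ setK F δ := by
  obtain ⟨a1, b1, M1, hM1, rfl⟩ := h1
  obtain ⟨a2, b2, M2, hM2, rfl⟩ := h2
  refine ⟨a1 * b2 + b1 * a2, b1 * b2 + δ * a1 * a2, M1 * M2, ?_, (map_mul _ _ _).symm⟩
  show (M1 : Matrix (Fin 2) (Fin 2) F) * (M2 : Matrix (Fin 2) (Fin 2) F) = _
  rw [hM1, hM2]
  apply Matrix.ext; intro i j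
  fin_cases i <;> fin_cases j <;>
    simp [Matrix.mul_apply, Fin.sum_univ_two, -mul_eq_mul_left_iff, -mul_eq_mul_right_iff,
      -mul_eq_zero, -add_right_inj, -add_left_inj] <;> ring

end Stmt18


open Stmt18 in
/-- For `c ≠ ±1`, the conic `(y+c)² - δx² = c²-1` has exactly `q+1` points over `F_q`, and for
any solution `(y,x)`, the double coset `K·!![y, δx; 0, 1]·K` is the disjoint union of the
`q+1` right cosets `!![y', δx'; 0, 1]·K`, one for each solution `(y', x')`. -/
theorem stmt18 (q : ℕ) (hq : IsPrimePow q) (hodd : Odd q)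
    (F : Type*) [Field F] [Fintype F] [DecidableEq F] (hF : Fintype.card F = q)
    (δ : F) (hδ : ¬ IsSquare δ) (c : F) (hc1 : c ≠ 1) (hc2 : c ≠ -1) :
    (Finset.univ.filter
        (fun p : F × F => (p.1 + c) ^ 2 - δ * p.2 ^ 2 = c ^ 2 - 1)).card = q + 1 ∧
    (∀ p ∈ Finset.univ.filter
        (fun p : F × F => (p.1 + c) ^ 2 - δ * p.2 ^ 2 = c ^ 2 - 1),
      setK F δ * pglSet F p.1 (δ * p.2) 0 1 * setK F δ
        = ⋃ p' ∈ Finset.univ.filter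
            (fun p' : F × F => (p'.1 + c) ^ 2 - δ * p'.2 ^ 2 = c ^ 2 - 1),
            pglSet F p'.1 (δ * p'.2) 0 1 * setK F δ) ∧
    ((Finset.univ.filter
        (fun p : F × F => (p.1 + c) ^ 2 - δ * p.2 ^ 2 = c ^ 2 - 1) : Finset (F × F)) :
        Set (F × F)).PairwiseDisjoint
      (fun p' : F × F => pglSet F p'.1 (δ * p'.2) 0 1 * setK F δ) := by
  subst hF
  have hoddc : Fintype.card F % 2 = 1 := Nat.odd_iff.mp hodd
  have h2 : (2 : F) ≠ 0 := by
    apply Ring.two_ne_zero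
    intro h
    have := FiniteField.even_card_of_char_two h
    omega
  have hδ0 := nsq_ne_zero hδ
  refine ⟨card_conic hδ h2 hoddc hc1 hc2, ?_, ?_⟩
  · intro p hp
    have hpc := (Finset.mem_filter.mp hp).2
    ext g
    constructor
    · intro hg
      obtain ⟨u, hu, kg, hkg, hmul⟩ := hg
      obtain ⟨k1g, hk1g, tg, htg, hmul2⟩ := hu
      obtain ⟨a1, b1, M1, hM1, rfl⟩ := hk1g
      obtain ⟨T, hT, rfl⟩ := htg
      obtain ⟨a2, b2, M2, hM2, rfl⟩ := hkg
      beta_reduce at hmul hmul2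
      have hgp : pglProj F (M1 * T * M2) = g := by
        rw [map_mul, map_mul, hmul2, hmul]
      have hcoe : ((M1 * T * M2 : GL (Fin 2) F) : Matrix (Fin 2) (Fin 2) F)
          = Km δ (b1, a1) * Sm δ p.1 p.2 * Km δ (b2, a2) := by
        show (M1 : Matrix (Fin 2) (Fin 2) F) * T * M2 = _
        rw [hM1, hT, hM2]; rfl
      have hR : Rm δ c ((M1 * T * M2 : GL (Fin 2) F) : Matrix (Fin 2) (Fin 2) F) = 0 := by
        rw [hcoe, Rinv]
        have hz : p.1 ^ 2 + 2 * c * p.1 - δ * p.2 ^ 2 + 1 = 0 := by linear_combination hpc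
        rw [hz, mul_zero]
      obtain ⟨Y, X, w, hY, hw, hfact, hconic⟩ :=
        decompose hδ h2 c _ (coe_det_ne_zero (M1 * T * M2)) hR
      have hdetS : (Sm δ Y X).det ≠ 0 := by rw [det_Sm]; exact hY
      have hdetK : (Km δ (w.1, w.2)).det ≠ 0 := by rw [det_Km]; exact hw
      apply Set.mem_biUnion (Finset.mem_filter.mpr ⟨Finset.mem_univ ((Y, X) : F × F), hconic⟩)
      have hprod : M1 * T * M2 = glMk _ hdetS * glMk _ hdetK := by
        apply Units.ext
        rw [Units.val_mul]
        exact hfact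
      refine ⟨pglProj F (glMk _ hdetS), ⟨glMk _ hdetS, rfl, rfl⟩,
        pglProj F (glMk _ hdetK), mem_setK δ (w.1, w.2) hw, ?_⟩
      beta_reduce
      rw [← map_mul (pglProj F), ← hprod]
      exact hgp
    · intro hg
      rcases Set.mem_iUnion₂.mp hg with ⟨p', hp', hgm⟩
      have hp'c := (Finset.mem_filter.mp hp').2
      obtain ⟨w1, w2, lam, hw1, hw2, hlam, heq⟩ := sup hδ h2 hc1 hc2 hpc hp'c
      obtain ⟨tg, ⟨M, hM, rfl⟩, kg, hkg, rfl⟩ := hgm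
      have hdet1 : (Km δ w1).det ≠ 0 := by rw [det_Km]; exact hw1
      have hdet2 : (Km δ w2).det ≠ 0 := by rw [det_Km]; exact hw2
      have hdetS : (Sm δ p.1 p.2).det ≠ 0 := by rw [det_Sm]; exact sol_y_ne_zero hδ hpc
      have hsc : ((glMk _ hdet1 * glMk _ hdetS * glMk _ hdet2 : GL (Fin 2) F) :
          Matrix (Fin 2) (Fin 2) F) = lam • (M : Matrix (Fin 2) (Fin 2) F) := by
        rw [Units.val_mul, Units.val_mul, hM]
        exact heq
      have hproj : pglProj F (glMk _ hdet1 * glMk _ hdetS * glMk _ hdet2) = pglProj F M :=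
        proj_smul _ _ lam hlam hsc
      beta_reduce
      have hre : pglProj F M * kg
          = (pglProj F (glMk _ hdet1) * pglProj F (glMk _ hdetS))
            * (pglProj F (glMk _ hdet2) * kg) := by
        rw [← hproj, map_mul, map_mul, mul_assoc]
      rw [hre]
      exact Set.mul_mem_mul
        (Set.mul_mem_mul (mem_setK δ w1 hw1) ⟨glMk _ hdetS, rfl, rfl⟩)
        (setK_mul_mem (mem_setK δ w2 hw2) hkg)
  · intro p' hp' p'' hp'' hne
    rw [Function.onFun]
    rw [Set.disjoint_left]
    intro g hg1 hg2
    obtain ⟨t1, ⟨M1, hM1, rfl⟩, k1, ⟨a1, b1, K1, hK1, rfl⟩, hprod1⟩ := hg1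
    obtain ⟨t2, ⟨M2, hM2, rfl⟩, k2, ⟨a2, b2, K2, hK2, rfl⟩, hprod2⟩ := hg2
    beta_reduce at hprod1 hprod2
    have hPQ : pglProj F (M1 * K1) = pglProj F (M2 * K2) := by
      rw [map_mul, map_mul, hprod1, hprod2]
    obtain ⟨u, hu, hval⟩ := proj_eq_scalar hPQ
    have hval' : !![p'.1, δ * p'.2; 0, 1] * !![b1, a1 * δ; a1, b1]
        = u • (!![p''.1, δ * p''.2; 0, 1] * !![b2, a2 * δ; a2, b2]) := by
      rw [← hM1, ← hK1, ← hM2, ← hK2]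
      exact hval
    have e00 := congrFun (congrFun hval' 0) 0
    have e01 := congrFun (congrFun hval' 0) 1
    have e10 := congrFun (congrFun hval' 1) 0
    have e11 := congrFun (congrFun hval' 1) 1
    simp [Matrix.mul_apply, Fin.sum_univ_two, -mul_eq_mul_left_iff, -mul_eq_mul_right_iff,
      -mul_eq_zero, -add_right_inj, -add_left_inj] at e00 e01 e10 e11
    have hdK : b1 ^ 2 - δ * a1 ^ 2 ≠ 0 := by
      have hd := coe_det_ne_zero K1
      rw [hK1, Matrix.det_fin_two_of] at hd
      intro h; exact hd (by linear_combination h)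
    have f00 : p'.1 * b1 + δ * p'.2 * a1 = p''.1 * b1 + δ * p''.2 * a1 := by
      linear_combination e00 - p''.1 * e11 - δ * p''.2 * e10
    have f01 : p'.1 * (a1 * δ) + δ * p'.2 * b1 = p''.1 * (a1 * δ) + δ * p''.2 * b1 := by
      linear_combination e01 - δ * p''.1 * e10 - δ * p''.2 * e11
    have keyY : (p'.1 - p''.1) * (b1 ^ 2 - δ * a1 ^ 2) = 0 := by
      linear_combination b1 * f00 - a1 * f01
    have keyX : (p'.2 - p''.2) * (b1 ^ 2 - δ * a1 ^ 2) * δ = 0 := by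
      linear_combination b1 * f01 - δ * a1 * f00
    have hY : p'.1 = p''.1 := by
      rcases mul_eq_zero.mp keyY with h | h
      · linear_combination h
      · exact absurd h hdK
    have hX : p'.2 = p''.2 := by
      rcases mul_eq_zero.mp keyX with h | h
      · rcases mul_eq_zero.mp h with h' | h'
        · linear_combination h'
        · exact absurd h' hdK
      · exact absurd h hδ0
    exact hne (Prod.ext_iff.mpr ⟨hY, hX⟩)
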